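/- arXiv:2212.07534 — 3 statements merged into one kernel-verified Lean document; each statement's English description precedes it below -/
import Mathlib

section
/- Almost-sure consensus of Algorithm 2: Suppose each ∇f_i is ν-Lipschitz and uniformly bounded (‖∇f_i(θ)‖ ≤ G for all θ), the weight matrix W is symmetric and doubly stochastic with η := ‖W − (1/m)𝟏𝟏ᵀ‖ < 1, and the stepsizes are square summable, i.e., Σ_{k=0}^∞ (λ^k)² < ∞. Then for every agent i, lim_{k→∞} ‖x_i^k − x̄^k‖ = 0 holds almost surely. -/
open MeasureTheory ProbabilityTheory Filter
open scoped NNReal Matrix ENNReal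

lemma asc_sum_sq_le_sq_sum {ι : Type*} [Fintype ι] (a : ι → ℝ) (h : ∀ i, 0 ≤ a i) :
    ∑ i, a i ^ 2 ≤ (∑ i, a i) ^ 2 := by
  calc ∑ i, a i ^ 2 ≤ ∑ i, a i * ∑ j, a j := by
        refine Finset.sum_le_sum fun i _ => ?_
        rw [sq]
        exact mul_le_mul_of_nonneg_left
          (Finset.single_le_sum (fun j _ => h j) (Finset.mem_univ i)) (h i)
    _ = (∑ i, a i) ^ 2 := by rw [← Finset.sum_mul, sq]

lemma asc_norm_le_sum {ι : Type*} [Fintype ι] {E : ι → Type*}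
    [∀ i, SeminormedAddCommGroup (E i)] (v : PiLp 2 E) : ‖v‖ ≤ ∑ i, ‖v i‖ := by
  have h2 : ‖v‖ ^ 2 ≤ (∑ i, ‖v i‖) ^ 2 := by
    rw [PiLp.norm_sq_eq_of_L2]
    exact asc_sum_sq_le_sq_sum _ fun i => norm_nonneg _
  have := Real.sqrt_le_sqrt h2
  rwa [Real.sqrt_sq (norm_nonneg _),
    Real.sqrt_sq (Finset.sum_nonneg fun i _ => norm_nonneg _)] at this

lemma asc_apply_le_norm {ι : Type*} [Fintype ι] {E : ι → Type*}
    [∀ i, SeminormedAddCommGroup (E i)] (v : PiLp 2 E) (i : ι) : ‖v i‖ ≤ ‖v‖ := by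
  have h2 : ‖v i‖ ^ 2 ≤ ‖v‖ ^ 2 := by
    rw [PiLp.norm_sq_eq_of_L2]
    exact Finset.single_le_sum (f := fun j => ‖v j‖ ^ 2) (fun j _ => sq_nonneg _)
      (Finset.mem_univ i)
  have := Real.sqrt_le_sqrt h2
  rwa [Real.sqrt_sq (norm_nonneg _), Real.sqrt_sq (norm_nonneg _)] at this

lemma asc_geom_contract {η : ℝ} (hη0 : 0 ≤ η) (hη1 : η < 1) (S b : ℕ → ℝ)
    (hS0 : ∀ k, 0 ≤ S k)
    (hb : Tendsto b atTop (nhds 0))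
    (hrec : ∀ k, S (k + 1) ≤ η * S k + b k) :
    Tendsto S atTop (nhds 0) := by
  rw [Metric.tendsto_atTop]
  intro ε hε
  have h1η : 0 < 1 - η := by linarith
  obtain ⟨K, hK⟩ := (Metric.tendsto_atTop.mp hb) ((1 - η) * ε / 4) (by positivity)
  have key : ∀ n, S (K + n) ≤ η ^ n * S K + ε / 4 := by
    intro n
    induction n with
    | zero => simp; linarith [hε]
    | succ n ih =>
      have hb' : b (K + n) ≤ (1 - η) * ε / 4 := by
        have := hK (K + n) (Nat.le_add_right _ _)
        rw [Real.dist_eq, sub_zero] at this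
        exact (le_abs_self _).trans this.le
      have hr := hrec (K + n)
      have : S (K + (n + 1)) = S (K + n + 1) := by ring_nf
      rw [this]
      calc S (K + n + 1) ≤ η * S (K + n) + b (K + n) := hr
        _ ≤ η * (η ^ n * S K + ε / 4) + (1 - η) * ε / 4 := by
            have := mul_le_mul_of_nonneg_left ih hη0
            linarith
        _ = η ^ (n + 1) * S K + ε / 4 := by rw [pow_succ]; ring
  have hpow : Tendsto (fun n => η ^ n * S K) atTop (nhds 0) := by
    simpa using (tendsto_pow_atTop_nhds_zero_of_lt_one hη0 hη1).mul_const (S K)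
  obtain ⟨M, hM⟩ := (Metric.tendsto_atTop.mp hpow) (ε / 4) (by positivity)
  refine ⟨K + M, fun n hn => ?_⟩
  have hsub : K + (n - K) = n := by omega
  have h1 : S n ≤ η ^ (n - K) * S K + ε / 4 := by
    have := key (n - K); rwa [hsub] at this
  have h2 : η ^ (n - K) * S K < ε / 4 := by
    have := hM (n - K) (by omega)
    rw [Real.dist_eq, sub_zero] at this
    exact (le_abs_self _).trans_lt this
  rw [Real.dist_eq, sub_zero, abs_of_nonneg (hS0 n)]
  linarith

lemma asc_gaussian_sq_lt_top (σ : ℝ≥0) :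
    ∫⁻ y, ENNReal.ofReal (y ^ 2) ∂(gaussianReal 0 σ) < ∞ := by
  by_cases hσ : σ = 0
  · subst hσ
    rw [gaussianReal_zero_var]
    rw [lintegral_dirac' _ (by measurability)]
    simp
  · rw [gaussianReal_of_var_ne_zero _ hσ]
    rw [lintegral_withDensity_eq_lintegral_mul _ (measurable_gaussianPDF _ _)
      (by measurability)]
    have hint : Integrable (fun y : ℝ => gaussianPDFReal 0 σ y * y ^ 2) := by
      have hb : 0 < ((2 : ℝ) * σ)⁻¹ := by positivity
      have := (integrable_rpow_mul_exp_neg_mul_sq hb (s := 2) (by norm_num)).const_mul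
        ((Real.sqrt (2 * Real.pi * σ))⁻¹)
      refine this.congr (Filter.Eventually.of_forall fun y => ?_)
      simp only [ProbabilityTheory.gaussianPDFReal_def, sub_zero,
        show ((2:ℝ)) = ((2:ℕ):ℝ) by norm_num, Real.rpow_natCast]
      push_cast
      rw [neg_div, div_eq_inv_mul, ← neg_mul]
      ring
    have hle : ∫⁻ y, (gaussianPDF 0 σ * fun y => ENNReal.ofReal (y ^ 2)) y
        ≤ ∫⁻ y, ENNReal.ofReal (gaussianPDFReal 0 σ y * y ^ 2) := by
      refine lintegral_mono fun y => ?_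
      simp only [Pi.mul_apply, gaussianPDF]
      rw [← ENNReal.ofReal_mul (gaussianPDFReal_nonneg 0 σ y)]
    exact hle.trans_lt hint.lintegral_lt_top

lemma asc_noise_tendsto {Ω : Type*} [MeasureSpace Ω] [IsProbabilityMeasure (ℙ : Measure Ω)]
    (σ : ℝ≥0) (lam : ℕ → ℝ) (hlam : ∀ k, 0 ≤ lam k) (hsq : Summable fun k => lam k ^ 2)
    (Z : ℕ → Ω → ℝ) (hdist : ∀ k, Measure.map (Z k) ℙ = gaussianReal 0 σ) :
    ∀ᵐ ω ∂ℙ, Tendsto (fun k => lam k * |Z k ω|) atTop (nhds 0) := by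
  have hmeas : ∀ k, AEMeasurable (Z k) ℙ := by
    intro k
    refine aemeasurable_of_map_neZero ?_
    rw [hdist k]
    infer_instance
  set C := ∫⁻ y, ENNReal.ofReal (y ^ 2) ∂(gaussianReal 0 σ) with hC
  have hCfin : C < ∞ := asc_gaussian_sq_lt_top σ
  have hmom : ∀ k, ∫⁻ ω, ENNReal.ofReal ((lam k * |Z k ω|) ^ 2) ∂ℙ
      = ENNReal.ofReal (lam k ^ 2) * C := by
    intro k
    have h1 : ∀ ω, ENNReal.ofReal ((lam k * |Z k ω|) ^ 2)
        = ENNReal.ofReal (lam k ^ 2) * ENNReal.ofReal ((Z k ω) ^ 2) := by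
      intro ω
      rw [← ENNReal.ofReal_mul (sq_nonneg _)]
      congr 1
      rw [mul_pow, sq_abs]
    simp_rw [h1]
    rw [lintegral_const_mul' _ _ ENNReal.ofReal_ne_top]
    congr 1
    have := lintegral_map' (f := fun y : ℝ => ENNReal.ofReal (y ^ 2)) (g := Z k)
      (by exact (measurable_id.pow_const 2).ennreal_ofReal.aemeasurable) (hmeas k)
    rw [hdist k] at this
    exact this.symm
  have hfa : ∀ k, AEMeasurable (fun ω => ENNReal.ofReal ((lam k * |Z k ω|) ^ 2)) ℙ := by
    intro k
    exact ((((continuous_abs.measurable.comp_aemeasurable (hmeas k))).const_mul (lam k)).pow_const 2).ennreal_ofReal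
  have htsum : ∫⁻ ω, ∑' k, ENNReal.ofReal ((lam k * |Z k ω|) ^ 2) ∂ℙ < ∞ := by
    rw [lintegral_tsum hfa]
    simp_rw [hmom]
    rw [ENNReal.tsum_mul_right]
    refine ENNReal.mul_lt_top ?_ hCfin
    rw [← ENNReal.ofReal_tsum_of_nonneg (fun k => sq_nonneg _) hsq]
    exact ENNReal.ofReal_lt_top
  have hae : ∀ᵐ ω ∂ℙ, ∑' k, ENNReal.ofReal ((lam k * |Z k ω|) ^ 2) < ∞ :=
    ae_lt_top' (AEMeasurable.ennreal_tsum hfa) htsum.ne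
  filter_upwards [hae] with ω hω
  have hsummable : Summable (fun k => (lam k * |Z k ω|) ^ 2) := by
    have h1 : Summable (fun k => (ENNReal.ofReal ((lam k * |Z k ω|) ^ 2)).toReal) :=
      ENNReal.summable_toReal hω.ne
    refine h1.congr fun k => ?_
    rw [ENNReal.toReal_ofReal (sq_nonneg _)]
  have h0 : Tendsto (fun k => (lam k * |Z k ω|) ^ 2) atTop (nhds 0) :=
    hsummable.tendsto_atTop_zero
  have := (Real.continuous_sqrt.tendsto 0).comp h0
  rw [Real.sqrt_zero] at this
  refine this.congr fun k => ?_
  simp only [Function.comp]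
  rw [Real.sqrt_sq (mul_nonneg (hlam k) (abs_nonneg _))]
/-- **Almost-sure consensus of Algorithm 2** (Theorem 1 of the paper).
Each agent `i` has a differentiable local objective `f i` with `ν`-Lipschitz and
`G`-bounded gradient; the weight matrix `W` is symmetric, doubly stochastic, with
`η = ‖W - (1/m)𝟙𝟙ᵀ‖ < 1` (spectral norm); stepsizes are square summable; the privacy
noises `N k ω i` have i.i.d. zero-mean Gaussian coordinates of variance `σ`, independent
across iterations, agents and coordinates.  Then almost surely every `‖x_i^k - x̄^k‖ → 0`. -/
theorem almost_sure_consensus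
    {m d : ℕ} (hm : 0 < m)
    (f : Fin m → EuclideanSpace ℝ (Fin d) → ℝ)
    (hdiff : ∀ i, Differentiable ℝ (f i))
    (ν G : ℝ≥0)
    (hLip : ∀ i, LipschitzWith ν (gradient (f i)))
    (hG : ∀ i θ, ‖gradient (f i) θ‖ ≤ (G : ℝ))
    (W : Matrix (Fin m) (Fin m) ℝ)
    (hWsymm : W.IsSymm)
    (hWnonneg : ∀ i j, 0 ≤ W i j)
    (hWrow : W *ᵥ (fun _ => (1 : ℝ)) = fun _ => 1)
    (hWcol : (fun _ => (1 : ℝ)) ᵥ* W = fun _ => 1)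
    (hη : ‖Matrix.toEuclideanCLM (𝕜 := ℝ) (n := Fin m)
        (W - (m : ℝ)⁻¹ • Matrix.of (fun _ _ => (1 : ℝ)))‖ < 1)
    (lam : ℕ → ℝ) (hlam : ∀ k, 0 ≤ lam k)
    (hsq : Summable (fun k => lam k ^ 2))
    {Ω : Type*} [MeasureSpace Ω] [IsProbabilityMeasure (ℙ : Measure Ω)]
    (σ : ℝ≥0)
    (N : ℕ → Ω → Fin m → EuclideanSpace ℝ (Fin d))
    (hdist : ∀ k i j, Measure.map (fun ω => N k ω i j) ℙ = gaussianReal 0 σ)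
    (hindep : iIndepFun
      (fun p : ℕ × Fin m × Fin d => fun ω => N p.1 ω p.2.1 p.2.2) ℙ)
    (x : ℕ → Ω → Fin m → EuclideanSpace ℝ (Fin d))
    (x0 : Fin m → EuclideanSpace ℝ (Fin d)) (hx0 : ∀ ω, x 0 ω = x0)
    (hx : ∀ k ω i, x (k + 1) ω i =
      ∑ j, W i j • (x k ω j - lam k • (gradient (f j) (x k ω j) + N k ω j))) :
    ∀ᵐ ω ∂ℙ, ∀ i,
      Tendsto (fun k => ‖x k ω i - (m : ℝ)⁻¹ • ∑ j, x k ω j‖) atTop (nhds 0) := by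
  classical
  have hmR : (0 : ℝ) < m := Nat.cast_pos.mpr hm
  set Q : Matrix (Fin m) (Fin m) ℝ := W - (m : ℝ)⁻¹ • Matrix.of (fun _ _ => (1 : ℝ))
    with hQdef
  set η : ℝ := ‖Matrix.toEuclideanCLM (𝕜 := ℝ) (n := Fin m) Q‖ with hηdef
  have hη0 : (0 : ℝ) ≤ η := norm_nonneg _
  have hη1 : η < 1 := hη
  have hWrow' : ∀ i, ∑ j, W i j = 1 := by
    intro i
    have := congrFun hWrow i
    simpa [Matrix.mulVec, dotProduct] using this
  have hWcol' : ∀ j, ∑ i, W i j = 1 := by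
    intro j
    have := congrFun hWcol j
    simpa [Matrix.vecMul, dotProduct] using this
  have hQapp : ∀ i j, Q i j = W i j - (m : ℝ)⁻¹ := by
    intro i j
    simp [hQdef, Matrix.sub_apply, Matrix.smul_apply, Matrix.of_apply]
  have hQrow : ∀ i, ∑ j, Q i j = 0 := by
    intro i
    simp only [hQapp]
    rw [Finset.sum_sub_distrib, hWrow' i, Finset.sum_const, Finset.card_univ,
      Fintype.card_fin, nsmul_eq_mul]
    field_simp
    norm_num
  have hQnorm : ∀ u : Fin m → ℝ,
      ‖(WithLp.equiv 2 (Fin m → ℝ)).symm (Q *ᵥ u)‖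
        ≤ η * ‖(WithLp.equiv 2 (Fin m → ℝ)).symm u‖ := by
    intro u
    have h1 := (Matrix.toEuclideanCLM (𝕜 := ℝ) (n := Fin m) Q).le_opNorm
      ((WithLp.equiv 2 _).symm u)
    exact h1
  have hnoise : ∀ᵐ ω ∂ℙ, ∀ (j : Fin m) (c : Fin d),
      Tendsto (fun k => lam k * |N k ω j c|) atTop (nhds 0) := by
    rw [ae_all_iff]
    intro j
    rw [ae_all_iff]
    intro c
    exact asc_noise_tendsto σ lam hlam hsq (fun k ω => N k ω j c) (fun k => hdist k j c)
  have hlam0 : Tendsto lam atTop (nhds 0) := by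
    have h := (Real.continuous_sqrt.tendsto 0).comp hsq.tendsto_atTop_zero
    rw [Real.sqrt_zero] at h
    refine h.congr fun k => ?_
    simp only [Function.comp]
    rw [Real.sqrt_sq (hlam k)]
  filter_upwards [hnoise] with ω hω i
  -- deterministic part
  set xbar : ℕ → EuclideanSpace ℝ (Fin d) := fun k => (m : ℝ)⁻¹ • ∑ j, x k ω j with hxbar
  set e : ℕ → Fin m → EuclideanSpace ℝ (Fin d) := fun k i => x k ω i - xbar k with he
  set E : ℕ → PiLp 2 (fun _ : Fin m => EuclideanSpace ℝ (Fin d)) :=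
    fun k => (WithLp.equiv 2 _).symm (e k) with hE
  set S : ℕ → ℝ := fun k => ‖E k‖ with hSdef
  set b : ℕ → ℝ := fun k => lam k * ((m : ℝ) * G + ∑ j, ∑ c, |N k ω j c|) with hbdef
  have hbtend : Tendsto b atTop (nhds 0) := by
    have h1 : Tendsto (fun k => lam k * ((m : ℝ) * G)
        + ∑ j : Fin m, ∑ c : Fin d, lam k * |N k ω j c|) atTop (nhds 0) := by
      have ha := hlam0.mul_const ((m : ℝ) * G)
      have hb2 : Tendsto (fun k => ∑ j : Fin m, ∑ c : Fin d, lam k * |N k ω j c|)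
          atTop (nhds 0) := by
        have := tendsto_finset_sum (Finset.univ : Finset (Fin m))
          (fun j _ => tendsto_finset_sum (Finset.univ : Finset (Fin d))
            (fun c _ => hω j c))
        simpa using this
      simpa using ha.add hb2
    refine h1.congr fun k => ?_
    simp only [hbdef, mul_add, Finset.mul_sum]
  have hS0 : ∀ k, 0 ≤ S k := fun k => norm_nonneg _
  have hrec : ∀ k, S (k + 1) ≤ η * S k + b k := by
    intro k
    set g : Fin m → EuclideanSpace ℝ (Fin d) :=
      fun j => gradient (f j) (x k ω j) + N k ω j with hgdef
    set z : Fin m → EuclideanSpace ℝ (Fin d) := fun j => e k j - lam k • g j with hzdef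
    set Z : PiLp 2 (fun _ : Fin m => EuclideanSpace ℝ (Fin d)) :=
      (WithLp.equiv 2 _).symm z with hZdef
    set H : PiLp 2 (fun _ : Fin m => EuclideanSpace ℝ (Fin d)) :=
      (WithLp.equiv 2 _).symm g with hHdef
    -- Step B : the disagreement recursion
    have heB : ∀ i', e (k + 1) i' = ∑ j, Q i' j • z j := by
      intro i'
      have hz' : ∀ j, z j = (x k ω j - lam k • g j) - xbar k := by
        intro j
        simp only [hzdef, he]
        abel
      have hxbar1 : xbar (k + 1) = (m : ℝ)⁻¹ • ∑ j, (x k ω j - lam k • g j) := by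
        simp only [hxbar]
        congr 1
        rw [Finset.sum_congr rfl fun i'' _ => hx k ω i'', Finset.sum_comm]
        refine Finset.sum_congr rfl fun j _ => ?_
        rw [← Finset.sum_smul, hWcol' j, one_smul]
      have h2 : ∑ j, (W i' j - (m : ℝ)⁻¹) • xbar k = (0 : EuclideanSpace ℝ (Fin d)) := by
        rw [← Finset.sum_smul]
        have h3 : ∑ j, (W i' j - (m : ℝ)⁻¹) = 0 := by
          have := hQrow i'
          simpa [hQapp] using this
        rw [h3, zero_smul]
      calc e (k + 1) i' = x (k + 1) ω i' - xbar (k + 1) := rfl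
        _ = (∑ j, W i' j • (x k ω j - lam k • g j))
            - (m : ℝ)⁻¹ • ∑ j, (x k ω j - lam k • g j) := by rw [hx k ω i', hxbar1]
        _ = ∑ j, (W i' j - (m : ℝ)⁻¹) • (x k ω j - lam k • g j) := by
            rw [Finset.smul_sum, ← Finset.sum_sub_distrib]
            exact Finset.sum_congr rfl fun j _ => (sub_smul _ _ _).symm
        _ = ∑ j, (W i' j - (m : ℝ)⁻¹) • ((x k ω j - lam k • g j) - xbar k) := by
            rw [eq_comm, ← sub_zero (∑ j, (W i' j - (m : ℝ)⁻¹) • (x k ω j - lam k • g j)),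
              ← h2, ← Finset.sum_sub_distrib]
            exact Finset.sum_congr rfl fun j _ => (smul_sub _ _ _)
        _ = ∑ j, Q i' j • z j :=
            Finset.sum_congr rfl fun j _ => by rw [hQapp, hz' j]
    -- norms of stacked vectors, coordinatewise
    have hcoordsum : ∀ v : PiLp 2 (fun _ : Fin m => EuclideanSpace ℝ (Fin d)),
        ‖v‖ ^ 2 = ∑ j, ∑ c, v j c ^ 2 := by
      intro v
      rw [PiLp.norm_sq_eq_of_L2]
      refine Finset.sum_congr rfl fun j _ => ?_
      rw [PiLp.norm_sq_eq_of_L2]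
      exact Finset.sum_congr rfl fun c _ => by rw [Real.norm_eq_abs, sq_abs]
    have happly : ∀ (Qr : Fin m → ℝ) (v : Fin m → EuclideanSpace ℝ (Fin d)) (c : Fin d),
        (∑ j, Qr j • v j) c = ∑ j, Qr j * v j c := by
      intro Qr v c
      have hms : PiLp.proj (𝕜 := ℝ) 2 (fun _ : Fin d => ℝ) c (∑ j, Qr j • v j)
          = ∑ j, Qr j * v j c := by
        rw [map_sum]
        simp [PiLp.smul_apply, smul_eq_mul]
      exact hms
    -- Step C : contraction
    have hC2 : S (k + 1) ^ 2 ≤ (η * ‖Z‖) ^ 2 := by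
      have hE1 : S (k + 1) ^ 2 = ∑ c, ∑ j, e (k + 1) j c ^ 2 := by
        simp only [hSdef]
        rw [hcoordsum (E (k + 1)), Finset.sum_comm]
        rfl
      have hZ2 : (η * ‖Z‖) ^ 2 = ∑ c, η ^ 2 * ∑ j, z j c ^ 2 := by
        rw [mul_pow, hcoordsum Z, Finset.sum_comm, Finset.mul_sum]
        rfl
      rw [hE1, hZ2]
      refine Finset.sum_le_sum fun c _ => ?_
      have hvec : (fun j => e (k + 1) j c) = Q *ᵥ (fun j => z j c) := by
        funext j'
        rw [heB j', happly]
        simp [Matrix.mulVec, dotProduct]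
      have h5 : ∑ j, e (k + 1) j c ^ 2
          = ‖(WithLp.equiv 2 (Fin m → ℝ)).symm (Q *ᵥ fun j => z j c)‖ ^ 2 := by
        rw [PiLp.norm_sq_eq_of_L2]
        refine Finset.sum_congr rfl fun j _ => ?_
        rw [WithLp.equiv_symm_apply, PiLp.toLp_apply, ← hvec, Real.norm_eq_abs, sq_abs]
      have h6 : ‖(WithLp.equiv 2 (Fin m → ℝ)).symm (fun j => z j c)‖ ^ 2
          = ∑ j, z j c ^ 2 := by
        rw [PiLp.norm_sq_eq_of_L2]
        exact Finset.sum_congr rfl fun j _ => by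
          rw [WithLp.equiv_symm_apply, PiLp.toLp_apply, Real.norm_eq_abs, sq_abs]
      rw [h5, ← h6, ← mul_pow]
      exact pow_le_pow_left₀ (norm_nonneg _) (hQnorm fun j => z j c) 2
    have hC : S (k + 1) ≤ η * ‖Z‖ := by
      have h1 := Real.sqrt_le_sqrt hC2
      rwa [Real.sqrt_sq (hS0 _), Real.sqrt_sq (mul_nonneg hη0 (norm_nonneg _))] at h1
    -- Step D : triangle inequality
    have hZE : Z = E k - lam k • H := rfl
    have hD : ‖Z‖ ≤ S k + lam k * ‖H‖ := by
      rw [hZE]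
      calc ‖E k - lam k • H‖ ≤ ‖E k‖ + ‖lam k • H‖ := norm_sub_le _ _
        _ = S k + lam k * ‖H‖ := by
            rw [norm_smul, Real.norm_eq_abs, abs_of_nonneg (hlam k)]
    -- Step E : bound the drift norm
    have hHb : ‖H‖ ≤ (m : ℝ) * G + ∑ j, ∑ c, |N k ω j c| := by
      refine (asc_norm_le_sum H).trans ?_
      have h1 : ∀ j : Fin m, ‖H j‖ ≤ (G : ℝ) + ∑ c, |N k ω j c| := by
        intro j
        have h2 : H j = gradient (f j) (x k ω j) + N k ω j := rfl
        rw [h2]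
        refine (norm_add_le _ _).trans (add_le_add (hG j _) ?_)
        refine (asc_norm_le_sum (N k ω j)).trans
          (le_of_eq (Finset.sum_congr rfl fun c _ => by rw [Real.norm_eq_abs]))
      refine (Finset.sum_le_sum fun j _ => h1 j).trans ?_
      rw [Finset.sum_add_distrib, Finset.sum_const, Finset.card_univ, Fintype.card_fin,
        nsmul_eq_mul]
    -- combine
    have hXnn : (0 : ℝ) ≤ (m : ℝ) * G + ∑ j, ∑ c, |N k ω j c| := by positivity
    calc S (k + 1) ≤ η * ‖Z‖ := hC
      _ ≤ η * (S k + lam k * ((m : ℝ) * G + ∑ j, ∑ c, |N k ω j c|)) := by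
          refine mul_le_mul_of_nonneg_left (hD.trans ?_) hη0
          exact add_le_add_right (mul_le_mul_of_nonneg_left hHb (hlam k)) _
      _ = η * S k + η * (lam k * ((m : ℝ) * G + ∑ j, ∑ c, |N k ω j c|)) := mul_add _ _ _
      _ ≤ η * S k + b k := by
          refine add_le_add_right ?_ _
          have hle : η * (lam k * ((m : ℝ) * G + ∑ j, ∑ c, |N k ω j c|))
              ≤ 1 * (lam k * ((m : ℝ) * G + ∑ j, ∑ c, |N k ω j c|)) :=
            mul_le_mul_of_nonneg_right hη1.le (mul_nonneg (hlam k) hXnn)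
          simpa [hbdef] using hle
  have hStend : Tendsto S atTop (nhds 0) := asc_geom_contract hη0 hη1 S b hS0 hbtend hrec
  refine squeeze_zero (fun k => norm_nonneg _) (fun k => ?_) hStend
  have : x k ω i - (m : ℝ)⁻¹ • ∑ j, x k ω j = e k i := rfl
  rw [this]
  have h2 : e k i = E k i := rfl
  rw [h2]
  exact asc_apply_le_norm (E k) i
end

section
/- Mean-square consensus of Algorithm 2: Suppose each ∇f_i is ν-Lipschitz and uniformly bounded (‖∇f_i(θ)‖ ≤ G for all θ), the weight matrix W is symmetric and doubly stochastic with η := ‖W − (1/m)𝟏𝟏ᵀ‖ < 1, and Σ_{k=0}^∞ (λ^k)² < ∞. Then for every agent i, lim_{k→∞} E[‖x_i^k − x̄^k‖²] = 0, where the expectation is taken over the Gaussian noise sequence {N^k}. -/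
open MeasureTheory ProbabilityTheory Filter Real
open scoped NNReal Matrix

lemma gauss_sq_integrable (σ : ℝ≥0) :
    Integrable (fun y : ℝ => y ^ 2) (gaussianReal 0 σ) := by
  by_cases hσ : σ = 0
  · rw [hσ, gaussianReal_zero_var]
    refine ⟨by fun_prop, ?_⟩
    rw [HasFiniteIntegral, lintegral_dirac]
    simp
  · rw [gaussianReal_of_var_ne_zero _ hσ,
      integrable_withDensity_iff (measurable_gaussianPDF _ _)
        (Filter.Eventually.of_forall fun x => ENNReal.ofReal_lt_top)]
    have hb : (0:ℝ) < (2 * σ : ℝ)⁻¹ := by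
      have : (0:ℝ) < (σ:ℝ) := by positivity
      positivity
    have h := (integrable_rpow_mul_exp_neg_mul_sq hb (by norm_num : (-1:ℝ) < 2)).const_mul
      ((Real.sqrt (2 * π * σ))⁻¹)
    refine h.congr ?_
    filter_upwards with y
    rw [gaussianPDF, ENNReal.toReal_ofReal (gaussianPDFReal_nonneg _ _ _),
      gaussianPDFReal]
    have hy : y ^ (2:ℝ) = y ^ 2 := by
      rw [show (2:ℝ) = ((2:ℕ):ℝ) by norm_num, Real.rpow_natCast]
    rw [hy]
    have hσ' : (σ:ℝ) ≠ 0 := by exact_mod_cast hσ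
    have : -(y - 0) ^ 2 / (2 * σ) = -(2 * σ:ℝ)⁻¹ * y ^ 2 := by
      field_simp
      ring
    rw [this]; ring

lemma seq_tendsto_zero {a b : ℕ → ℝ} {c : ℝ} (hc0 : 0 ≤ c) (hc1 : c < 1)
    (ha : ∀ k, 0 ≤ a k) (hb : ∀ k, 0 ≤ b k) (hsum : Summable b)
    (hrec : ∀ k, a (k + 1) ≤ c * a k + b k) :
    Tendsto a atTop (nhds 0) := by
  have key : ∀ K n, K ≤ n → a n ≤ c ^ (n - K) * a K + ∑ j ∈ Finset.Ico K n, b j := by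
    intro K
    refine Nat.le_induction ?_ ?_
    · simp
    · intro n hKn ih
      have h1 := hrec n
      have h2 : c * a n ≤ c * (c ^ (n - K) * a K + ∑ j ∈ Finset.Ico K n, b j) :=
        mul_le_mul_of_nonneg_left ih hc0
      have hsumnn : 0 ≤ ∑ j ∈ Finset.Ico K n, b j := Finset.sum_nonneg fun j _ => hb j
      have h3 : c * (∑ j ∈ Finset.Ico K n, b j) ≤ ∑ j ∈ Finset.Ico K n, b j := by
        nlinarith
      rw [Finset.sum_Ico_succ_top hKn]
      have h5 : n + 1 - K = (n - K) + 1 := by omega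
      rw [h5, pow_succ]
      nlinarith [mul_nonneg (pow_nonneg hc0 (n - K)) (ha K)]
  rw [Metric.tendsto_atTop]
  intro ε hε
  have htail : Tendsto (fun n => ∑ i ∈ Finset.range n, b i) atTop (nhds (∑' i, b i)) :=
    hsum.hasSum.tendsto_sum_nat
  have : ∀ᶠ K in atTop, ∑' i, b i - ∑ i ∈ Finset.range K, b i < ε / 2 := by
    have h : Tendsto (fun K => (∑' i, b i) - ∑ i ∈ Finset.range K, b i) atTop
        (nhds ((∑' i, b i) - ∑' i, b i)) := tendsto_const_nhds.sub htail
    rw [sub_self] at h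
    exact h.eventually_lt_const (by linarith)
  obtain ⟨K, hK⟩ := this.exists
  have hpow : Tendsto (fun n => c ^ (n - K) * a K) atTop (nhds 0) := by
    have h0 : Tendsto (fun n : ℕ => c ^ n) atTop (nhds 0) :=
      tendsto_pow_atTop_nhds_zero_of_lt_one hc0 hc1
    have := (h0.comp (tendsto_sub_atTop_nat K)).mul_const (a K)
    simpa using this
  have hev : ∀ᶠ n in atTop, c ^ (n - K) * a K < ε / 2 :=
    hpow.eventually_lt_const (by linarith)
  obtain ⟨M, hM⟩ := (hev.and (eventually_ge_atTop K)).exists_forall_of_atTop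
  refine ⟨M, fun n hn => ?_⟩
  obtain ⟨h1, h2⟩ := hM n hn
  have h3 := key K n h2
  have h4 : ∑ j ∈ Finset.Ico K n, b j ≤ ∑' i, b i - ∑ i ∈ Finset.range K, b i := by
    rw [Finset.sum_Ico_eq_sub b h2]
    have : ∑ i ∈ Finset.range n, b i ≤ ∑' i, b i := Summable.sum_le_tsum _ (fun j _ => hb j) hsum
    linarith
  rw [Real.dist_eq, sub_zero, abs_of_nonneg (ha n)]
  linarith

lemma eucl_norm_sq' {n : ℕ} (v : EuclideanSpace ℝ (Fin n)) : ‖v‖ ^ 2 = ∑ i, (v i) ^ 2 := by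
  rw [EuclideanSpace.norm_eq, Real.sq_sqrt (Finset.sum_nonneg fun i _ => sq_nonneg _)]
  simp [Real.norm_eq_abs, sq_abs]

lemma sum_smul_apply' {n m d : ℕ} (M : Matrix (Fin n) (Fin m) ℝ)
    (y : Fin m → EuclideanSpace ℝ (Fin d)) (i : Fin n) (c : Fin d) :
    (∑ j, M i j • y j) c = ∑ j, M i j * y j c := by
  have h : (∑ j, M i j • y j) c = ∑ j, (M i j • y j) c :=
    by rw [WithLp.ofLp_sum]; exact Finset.sum_apply c Finset.univ _
  rw [h]
  simp [PiLp.smul_apply, smul_eq_mul]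

lemma contract {m d : ℕ} (M : Matrix (Fin m) (Fin m) ℝ)
    (y : Fin m → EuclideanSpace ℝ (Fin d)) :
    ∑ i, ‖∑ j, M i j • y j‖ ^ 2 ≤
      ‖Matrix.toEuclideanCLM (𝕜 := ℝ) (n := Fin m) M‖ ^ 2 * ∑ i, ‖y i‖ ^ 2 := by
  set η := ‖Matrix.toEuclideanCLM (𝕜 := ℝ) (n := Fin m) M‖ with hη
  calc ∑ i, ‖∑ j, M i j • y j‖ ^ 2
      = ∑ i, ∑ c, ((∑ j, M i j • y j) c) ^ 2 := by
        simp_rw [eucl_norm_sq']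
    _ = ∑ c, ∑ i, (∑ j, M i j * y j c) ^ 2 := by
        rw [Finset.sum_comm]
        simp_rw [sum_smul_apply']
    _ ≤ ∑ c, η ^ 2 * ∑ j, (y j c) ^ 2 := by
        refine Finset.sum_le_sum fun c _ => ?_
        have hv : ∑ i, (∑ j, M i j * y j c) ^ 2
            = ‖Matrix.toEuclideanCLM (𝕜 := ℝ) (n := Fin m) M
                ((WithLp.equiv 2 _).symm (fun j => y j c))‖ ^ 2 := by
          rw [eucl_norm_sq']
          refine Finset.sum_congr rfl fun i _ => ?_
          congr 1
        rw [hv]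
        have h1 : ‖Matrix.toEuclideanCLM (𝕜 := ℝ) (n := Fin m) M
            ((WithLp.equiv 2 _).symm (fun j => y j c))‖
            ≤ η * ‖(WithLp.equiv 2 (Fin m → ℝ)).symm (fun j => y j c)‖ :=
          ContinuousLinearMap.le_opNorm _ _
        have h2 : ‖(WithLp.equiv 2 (Fin m → ℝ)).symm (fun j => y j c)‖ ^ 2
            = ∑ j, (y j c) ^ 2 := by
          rw [eucl_norm_sq']
          simp
        rw [← h2]
        have hn1 : (0:ℝ) ≤ ‖(WithLp.equiv 2 (Fin m → ℝ)).symm (fun j => y j c)‖ := norm_nonneg _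
        nlinarith [norm_nonneg (Matrix.toEuclideanCLM (𝕜 := ℝ) (n := Fin m) M
            ((WithLp.equiv 2 _).symm (fun j => y j c)))]
    _ = η ^ 2 * ∑ i, ‖y i‖ ^ 2 := by
        rw [← Finset.mul_sum, Finset.sum_comm]
        simp_rw [eucl_norm_sq']

lemma aemeasurable_pi' {Ω ι : Type*} [MeasurableSpace Ω] {μ : MeasureTheory.Measure Ω}
    [Countable ι] {τ : ι → Type*} [∀ i, MeasurableSpace (τ i)]
    {g : Ω → ∀ i, τ i} (h : ∀ i, AEMeasurable (fun ω => g ω i) μ) : AEMeasurable g μ := by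
  choose h' hm hae using h
  refine ⟨fun ω i => h' i ω, measurable_pi_iff.2 hm, ?_⟩
  filter_upwards [ae_all_iff.2 hae] with ω hω
  funext i
  exact hω i

lemma aemeasurable_euclidean {Ω : Type*} [MeasurableSpace Ω] {μ : Measure Ω} {d : ℕ}
    {g : Ω → EuclideanSpace ℝ (Fin d)} (h : ∀ c, AEMeasurable (fun ω => g ω c) μ) :
    AEMeasurable g μ := by
  have h1 : AEMeasurable (fun ω => (MeasurableEquiv.toLp 2 (Fin d → ℝ)).symm (g ω)) μ :=
    aemeasurable_pi' h
  have h2 := (MeasurableEquiv.toLp 2 (Fin d → ℝ)).symm.symm.measurable.comp_aemeasurable h1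
  exact h2

lemma memLp_euclidean {Ω : Type*} [MeasurableSpace Ω] {μ : Measure Ω} {d : ℕ}
    {g : Ω → EuclideanSpace ℝ (Fin d)} (hg : AEMeasurable g μ)
    (h : ∀ c, Integrable (fun ω => (g ω c) ^ 2) μ) : MemLp g 2 μ := by
  rw [memLp_two_iff_integrable_sq_norm hg.aestronglyMeasurable]
  have he : (fun ω => ‖g ω‖ ^ 2) = fun ω => ∑ c, (g ω c) ^ 2 :=
    funext fun ω => eucl_norm_sq' _
  rw [he]
  exact integrable_finset_sum _ fun c _ => h c

lemma sq_sub_ineq {E : Type*} [NormedAddCommGroup E] (a b : E) {ε : ℝ} (hε : 0 < ε) :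
    ‖a - b‖ ^ 2 ≤ (1 + ε) * ‖a‖ ^ 2 + (1 + ε⁻¹) * ‖b‖ ^ 2 := by
  have h := norm_sub_le a b
  have h2 : ‖a - b‖ ^ 2 ≤ (‖a‖ + ‖b‖) ^ 2 := by
    nlinarith [norm_nonneg (a - b), norm_nonneg a, norm_nonneg b]
  have h3 : 2 * ‖a‖ * ‖b‖ ≤ ε * ‖a‖ ^ 2 + ε⁻¹ * ‖b‖ ^ 2 := by
    have h4 := sq_nonneg (ε * ‖a‖ - ‖b‖)
    have h5 : ε * ε⁻¹ = 1 := mul_inv_cancel₀ (ne_of_gt hε)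
    have h6 : (0:ℝ) < ε⁻¹ := by positivity
    nlinarith [mul_nonneg h6.le h4]
  nlinarith

set_option maxHeartbeats 1600000 in
/-- **Mean-square consensus of Algorithm 2** (Remark 3 of the paper).
Each agent `i` has a differentiable local objective `f i` with `ν`-Lipschitz and
`G`-bounded gradient; the weight matrix `W` is symmetric, doubly stochastic, with
`η = ‖W - (1/m)𝟙𝟙ᵀ‖ < 1` (spectral norm); stepsizes are square summable; the privacy
noises `N k ω i` have i.i.d. zero-mean Gaussian coordinates of variance `σ`, independent
across iterations, agents and coordinates.  Then `E[‖x_i^k - x̄^k‖²] → 0` for every agent `i`, the expectation being over the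
Gaussian noise sequence. -/
theorem mean_square_consensus
    {m d : ℕ} (hm : 0 < m)
    (f : Fin m → EuclideanSpace ℝ (Fin d) → ℝ)
    (hdiff : ∀ i, Differentiable ℝ (f i))
    (ν G : ℝ≥0)
    (hLip : ∀ i, LipschitzWith ν (gradient (f i)))
    (hG : ∀ i θ, ‖gradient (f i) θ‖ ≤ (G : ℝ))
    (W : Matrix (Fin m) (Fin m) ℝ)
    (hWsymm : W.IsSymm)
    (hWnonneg : ∀ i j, 0 ≤ W i j)
    (hWrow : W *ᵥ (fun _ => (1 : ℝ)) = fun _ => 1)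
    (hWcol : (fun _ => (1 : ℝ)) ᵥ* W = fun _ => 1)
    (hη : ‖Matrix.toEuclideanCLM (𝕜 := ℝ) (n := Fin m)
        (W - (m : ℝ)⁻¹ • Matrix.of (fun _ _ => (1 : ℝ)))‖ < 1)
    (lam : ℕ → ℝ) (hlam : ∀ k, 0 ≤ lam k)
    (hsq : Summable (fun k => lam k ^ 2))
    {Ω : Type*} [MeasureSpace Ω] [IsProbabilityMeasure (ℙ : Measure Ω)]
    (σ : ℝ≥0)
    (N : ℕ → Ω → Fin m → EuclideanSpace ℝ (Fin d))
    (hdist : ∀ k i j, Measure.map (fun ω => N k ω i j) ℙ = gaussianReal 0 σ)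
    (hindep : iIndepFun
      (fun p : ℕ × Fin m × Fin d => fun ω => N p.1 ω p.2.1 p.2.2) ℙ)
    (x : ℕ → Ω → Fin m → EuclideanSpace ℝ (Fin d))
    (x0 : Fin m → EuclideanSpace ℝ (Fin d)) (hx0 : ∀ ω, x 0 ω = x0)
    (hx : ∀ k ω i, x (k + 1) ω i =
      ∑ j, W i j • (x k ω j - lam k • (gradient (f j) (x k ω j) + N k ω j))) :
    ∀ i, Tendsto
      (fun k => ∫ ω, ‖x k ω i - (m : ℝ)⁻¹ • ∑ j, x k ω j‖ ^ 2 ∂ℙ) atTop (nhds 0) := by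
  classical
  intro i₀
  -- basic matrix facts
  have hcolW : ∀ j, ∑ i, W i j = 1 := by
    intro j
    have h := congrFun hWcol j
    simpa [Matrix.vecMul, dotProduct] using h
  have hrowW : ∀ i, ∑ j, W i j = 1 := by
    intro i
    have h := congrFun hWrow i
    simpa [Matrix.mulVec, dotProduct] using h
  set M : Matrix (Fin m) (Fin m) ℝ :=
    W - (m : ℝ)⁻¹ • Matrix.of (fun _ _ => (1 : ℝ)) with hMdef
  have hMapp : ∀ i j, M i j = W i j - (m : ℝ)⁻¹ := by
    intro i j
    simp [hMdef, Matrix.sub_apply]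
  have hm' : ((m : ℝ)) ≠ 0 := Nat.cast_ne_zero.2 hm.ne'
  have hMrow : ∀ i, ∑ j, M i j = 0 := by
    intro i
    simp only [hMapp]
    rw [Finset.sum_sub_distrib, hrowW]
    simp only [Finset.sum_const, Finset.card_univ, Fintype.card_fin, nsmul_eq_mul]
    field_simp
    norm_num
  set η : ℝ := ‖Matrix.toEuclideanCLM (𝕜 := ℝ) (n := Fin m) M‖ with hηdef
  have hη0 : 0 ≤ η := norm_nonneg _
  have hη1 : η < 1 := hη
  have hη2 : η ^ 2 < 1 := by nlinarith
  set ε : ℝ := (1 - η ^ 2) / (1 + η ^ 2) with hεdef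
  have hεpos : 0 < ε := div_pos (by nlinarith) (by positivity)
  set c1 : ℝ := η ^ 2 * (1 + ε) with hc1def
  set c2 : ℝ := η ^ 2 * (1 + ε⁻¹) with hc2def
  have hc10 : 0 ≤ c1 := by positivity
  have hc20 : 0 ≤ c2 := by positivity
  have hc11 : c1 < 1 := by
    rw [hc1def, hεdef]
    have h1 : (1 + (1 - η ^ 2) / (1 + η ^ 2)) = 2 / (1 + η ^ 2) := by
      field_simp
      ring
    rw [h1, show η ^ 2 * (2 / (1 + η ^ 2)) = 2 * η ^ 2 / (1 + η ^ 2) by ring,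
      div_lt_one (by positivity)]
    nlinarith
  -- measurability
  have hNc_aem : ∀ k j c, AEMeasurable (fun ω => N k ω j c) ℙ := by
    intro k j c
    exact aemeasurable_of_map_neZero (by rw [hdist k j c]; infer_instance)
  have hN_aem : ∀ k j, AEMeasurable (fun ω => N k ω j) ℙ := fun k j =>
    aemeasurable_euclidean (fun c => hNc_aem k j c)
  have hx_aem : ∀ k j, AEMeasurable (fun ω => x k ω j) ℙ := by
    intro k
    induction k with
    | zero =>
      intro j
      have he : (fun ω => x 0 ω j) = fun _ => x0 j := funext fun ω => by rw [hx0]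
      rw [he]; exact aemeasurable_const
    | succ k ih =>
      intro j
      have he : (fun ω => x (k + 1) ω j) = fun ω => ∑ l, W j l •
          (x k ω l - lam k • (gradient (f l) (x k ω l) + N k ω l)) :=
        funext fun ω => hx k ω j
      rw [he]
      refine Finset.aemeasurable_fun_sum (f := fun l ω => W j l •
          (x k ω l - lam k • (gradient (f l) (x k ω l) + N k ω l))) _ fun l _ => ?_
      refine AEMeasurable.const_smul (g := fun ω => x k ω l - lam k • (gradient (f l) (x k ω l) + N k ω l)) ?_ (W j l)
      exact (ih l).sub
        ((((hLip l).continuous.measurable.comp_aemeasurable (ih l)).add (hN_aem k l)).const_smul (lam k))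
  -- square integrability of the noise
  have hNc_sq_int : ∀ k j c, Integrable (fun ω => (N k ω j c) ^ 2) ℙ := by
    intro k j c
    have hmeas : Measurable fun y : ℝ => y ^ 2 := by fun_prop
    have h := gauss_sq_integrable σ
    rw [← hdist k j c,
      integrable_map_measure hmeas.aestronglyMeasurable (hNc_aem k j c)] at h
    exact h
  set V : ℝ := ∫ y, y ^ 2 ∂(gaussianReal 0 σ) with hVdef
  have hV0 : 0 ≤ V := integral_nonneg fun y => sq_nonneg y
  have hNc_sq_eq : ∀ k j c, ∫ ω, (N k ω j c) ^ 2 ∂ℙ = V := by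
    intro k j c
    have hmeas : Measurable fun y : ℝ => y ^ 2 := by fun_prop
    have h := integral_map (φ := fun ω => N k ω j c) (f := fun y : ℝ => y ^ 2)
      (hNc_aem k j c) hmeas.aestronglyMeasurable
    rw [hdist k j c] at h
    rw [hVdef, h]
  have hN_L2 : ∀ k j, MemLp (fun ω => N k ω j) 2 ℙ := fun k j =>
    memLp_euclidean (hN_aem k j) (fun c => hNc_sq_int k j c)
  have hNsq_int : ∀ k j, Integrable (fun ω => ‖N k ω j‖ ^ 2) ℙ := fun k j =>
    (memLp_two_iff_integrable_sq_norm (hN_L2 k j).aestronglyMeasurable).1 (hN_L2 k j)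
  have hNnorm_eq : ∀ k j, ∫ ω, ‖N k ω j‖ ^ 2 ∂ℙ = d * V := by
    intro k j
    have he : (fun ω => ‖N k ω j‖ ^ 2) = fun ω => ∑ c, (N k ω j c) ^ 2 :=
      funext fun ω => eucl_norm_sq' _
    rw [he, integral_finset_sum _ fun c _ => hNc_sq_int k j c]
    simp [hNc_sq_eq k j]
  -- L² bounds for the iterates
  have hgrad_L2 : ∀ k j, MemLp (fun ω => gradient (f j) (x k ω j)) 2 ℙ := by
    intro k j
    exact MemLp.of_bound ((hLip j).continuous.measurable.comp_aemeasurable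
      (hx_aem k j)).aestronglyMeasurable G (Filter.Eventually.of_forall fun ω => hG j _)
  have hx_L2 : ∀ k j, MemLp (fun ω => x k ω j) 2 ℙ := by
    intro k
    induction k with
    | zero =>
      intro j
      have he : (fun ω => x 0 ω j) = fun _ => x0 j := funext fun ω => by rw [hx0]
      rw [he]; exact memLp_const _
    | succ k ih =>
      intro j
      have he : (fun ω => x (k + 1) ω j) = fun ω => ∑ l, W j l •
          (x k ω l - lam k • (gradient (f l) (x k ω l) + N k ω l)) :=
        funext fun ω => hx k ω j
      rw [he]
      refine memLp_finset_sum _ fun l _ => ?_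
      exact ((ih l).sub (((hgrad_L2 k l).add (hN_L2 k l)).const_smul (lam k))).const_smul (W j l)
  -- deviations
  set D : ℕ → Ω → Fin m → EuclideanSpace ℝ (Fin d) :=
    fun k ω i => x k ω i - (m : ℝ)⁻¹ • ∑ j, x k ω j with hDdef
  have hD_L2 : ∀ k i, MemLp (fun ω => D k ω i) 2 ℙ := by
    intro k i
    simp only [hDdef]
    exact (hx_L2 k i).sub ((memLp_finset_sum Finset.univ fun j _ => hx_L2 k j).const_smul ((m : ℝ)⁻¹))
  have hDsq_int : ∀ k i, Integrable (fun ω => ‖D k ω i‖ ^ 2) ℙ := fun k i =>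
    (memLp_two_iff_integrable_sq_norm (hD_L2 k i).aestronglyMeasurable).1 (hD_L2 k i)
  set u : ℕ → Ω → Fin m → EuclideanSpace ℝ (Fin d) :=
    fun k ω j => gradient (f j) (x k ω j) + N k ω j with hudef
  have hu_L2 : ∀ k j, MemLp (fun ω => u k ω j) 2 ℙ := by
    intro k j
    simp only [hudef]
    exact (hgrad_L2 k j).add (hN_L2 k j)
  have husq_int : ∀ k j, Integrable (fun ω => ‖u k ω j‖ ^ 2) ℙ := fun k j =>
    (memLp_two_iff_integrable_sq_norm (hu_L2 k j).aestronglyMeasurable).1 (hu_L2 k j)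
  set S : ℕ → Ω → ℝ := fun k ω => ∑ i, ‖D k ω i‖ ^ 2 with hSdef
  have hS_int : ∀ k, Integrable (S k) ℙ := fun k =>
    integrable_finset_sum _ fun i _ => hDsq_int k i
  set U : ℕ → Ω → ℝ := fun k ω => ∑ j, ‖u k ω j‖ ^ 2 with hUdef
  have hU_int : ∀ k, Integrable (U k) ℙ := fun k =>
    integrable_finset_sum _ fun j _ => husq_int k j
  -- the deviation recursion
  have hDrec : ∀ k ω i, D (k + 1) ω i = ∑ j, M i j • (D k ω j - lam k • u k ω j) := by
    intro k ω i
    have hz : ∀ i', x (k + 1) ω i' = ∑ j, W i' j • (x k ω j - lam k • u k ω j) :=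
      fun i' => hx k ω i'
    have hmean : ∑ i', x (k + 1) ω i' = ∑ j, (x k ω j - lam k • u k ω j) := by
      calc ∑ i', x (k + 1) ω i'
          = ∑ i', ∑ j, W i' j • (x k ω j - lam k • u k ω j) :=
            Finset.sum_congr rfl fun i' _ => hz i'
        _ = ∑ j, ∑ i', W i' j • (x k ω j - lam k • u k ω j) := Finset.sum_comm
        _ = ∑ j, (x k ω j - lam k • u k ω j) := by
            refine Finset.sum_congr rfl fun j _ => ?_
            rw [← Finset.sum_smul, hcolW j, one_smul]
    have h1 : D (k + 1) ω i = ∑ j, M i j • (x k ω j - lam k • u k ω j) := by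
      simp only [hDdef]
      rw [hz i, hmean, Finset.smul_sum, ← Finset.sum_sub_distrib]
      refine Finset.sum_congr rfl fun j _ => ?_
      rw [hMapp, sub_smul]
    rw [h1]
    have h2 : ∀ j, D k ω j - lam k • u k ω j
        = (x k ω j - lam k • u k ω j) - (m : ℝ)⁻¹ • ∑ l, x k ω l := by
      intro j
      simp only [hDdef]
      abel
    have h3 : ∑ j, M i j • (D k ω j - lam k • u k ω j)
        = ∑ j, M i j • (x k ω j - lam k • u k ω j)
          - ∑ j, M i j • ((m : ℝ)⁻¹ • ∑ l, x k ω l) := by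
      rw [← Finset.sum_sub_distrib]
      refine Finset.sum_congr rfl fun j _ => ?_
      rw [h2 j, smul_sub]
    rw [h3, ← Finset.sum_smul, hMrow i, zero_smul, sub_zero]
  -- pointwise contraction
  have hSrec : ∀ k ω, S (k + 1) ω ≤ c1 * S k ω + c2 * lam k ^ 2 * U k ω := by
    intro k ω
    have h1 : S (k + 1) ω = ∑ i, ‖∑ j, M i j • (D k ω j - lam k • u k ω j)‖ ^ 2 := by
      simp only [hSdef]
      exact Finset.sum_congr rfl fun i _ => by rw [hDrec k ω i]
    have h2 := contract M (fun j => D k ω j - lam k • u k ω j)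
    rw [← hηdef] at h2
    have h3 : ∀ j, ‖D k ω j - lam k • u k ω j‖ ^ 2
        ≤ (1 + ε) * ‖D k ω j‖ ^ 2 + (1 + ε⁻¹) * (lam k ^ 2 * ‖u k ω j‖ ^ 2) := by
      intro j
      have h := sq_sub_ineq (D k ω j) (lam k • u k ω j) hεpos
      rwa [norm_smul, Real.norm_eq_abs, abs_of_nonneg (hlam k), mul_pow] at h
    have h4 : ∑ j, ‖D k ω j - lam k • u k ω j‖ ^ 2
        ≤ (1 + ε) * S k ω + (1 + ε⁻¹) * (lam k ^ 2 * U k ω) := by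
      calc ∑ j, ‖D k ω j - lam k • u k ω j‖ ^ 2
          ≤ ∑ j, ((1 + ε) * ‖D k ω j‖ ^ 2 + (1 + ε⁻¹) * (lam k ^ 2 * ‖u k ω j‖ ^ 2)) :=
            Finset.sum_le_sum fun j _ => h3 j
        _ = (1 + ε) * S k ω + (1 + ε⁻¹) * (lam k ^ 2 * U k ω) := by
            rw [Finset.sum_add_distrib, ← Finset.mul_sum, ← Finset.mul_sum]
            congr 2
            rw [← Finset.mul_sum]
    calc S (k + 1) ω ≤ η ^ 2 * ∑ j, ‖D k ω j - lam k • u k ω j‖ ^ 2 := by rw [h1]; exact h2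
      _ ≤ η ^ 2 * ((1 + ε) * S k ω + (1 + ε⁻¹) * (lam k ^ 2 * U k ω)) :=
          mul_le_mul_of_nonneg_left h4 (by positivity)
      _ = c1 * S k ω + c2 * lam k ^ 2 * U k ω := by
          rw [hc1def, hc2def]; ring
  -- bound the noise-energy integral
  set B : ℝ := m * (2 * (G : ℝ) ^ 2 + 2 * (d * V)) with hBdef
  have hB0 : 0 ≤ B := by positivity
  have hUbound : ∀ k, ∫ ω, U k ω ∂ℙ ≤ B := by
    intro k
    have hpt : ∀ ω, U k ω ≤ ∑ j : Fin m, (2 * (G : ℝ) ^ 2 + 2 * ‖N k ω j‖ ^ 2) := by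
      intro ω
      simp only [hUdef, hudef]
      refine Finset.sum_le_sum fun j _ => ?_
      have h := norm_add_le (gradient (f j) (x k ω j)) (N k ω j)
      have hg := hG j (x k ω j)
      have hs := norm_nonneg (gradient (f j) (x k ω j) + N k ω j)
      have hn := norm_nonneg (N k ω j)
      have hgr := norm_nonneg (gradient (f j) (x k ω j))
      have h2 : ‖gradient (f j) (x k ω j) + N k ω j‖ ^ 2
          ≤ (‖gradient (f j) (x k ω j)‖ + ‖N k ω j‖) ^ 2 := pow_le_pow_left₀ hs h 2
      nlinarith [sq_nonneg ((G : ℝ) - ‖N k ω j‖), sq_nonneg (‖gradient (f j) (x k ω j)‖ - ‖N k ω j‖)]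
    have hint : ∀ j : Fin m, Integrable (fun ω => 2 * (G : ℝ) ^ 2 + 2 * ‖N k ω j‖ ^ 2) ℙ :=
      fun j => (integrable_const _).add ((hNsq_int k j).const_mul 2)
    have hRint : Integrable (fun ω => ∑ j : Fin m, (2 * (G : ℝ) ^ 2 + 2 * ‖N k ω j‖ ^ 2)) ℙ :=
      integrable_finset_sum _ fun j _ => hint j
    have h1 := integral_mono (hU_int k) hRint hpt
    have h2 : ∫ ω, ∑ j : Fin m, (2 * (G : ℝ) ^ 2 + 2 * ‖N k ω j‖ ^ 2) ∂ℙ = B := by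
      rw [integral_finset_sum _ fun j _ => hint j]
      have h3 : ∀ j ∈ Finset.univ,
          ∫ ω, (2 * (G : ℝ) ^ 2 + 2 * ‖N k ω j‖ ^ 2) ∂ℙ = 2 * (G : ℝ) ^ 2 + 2 * (d * V) := by
        intro j _
        have hint1 : Integrable (fun _ : Ω => 2 * (G : ℝ) ^ 2) ℙ := integrable_const _
        have hint2 : Integrable (fun ω => 2 * ‖N k ω j‖ ^ 2) ℙ := (hNsq_int k j).const_mul 2
        rw [integral_add hint1 hint2, integral_const, integral_const_mul, hNnorm_eq k j]
        simp
      rw [Finset.sum_congr rfl h3]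
      simp only [hBdef, Finset.sum_const, Finset.card_univ, Fintype.card_fin, nsmul_eq_mul]
      try ring
    linarith [h1, h2.le, h2.ge]
  -- the expected-energy recursion
  set a : ℕ → ℝ := fun k => ∫ ω, S k ω ∂ℙ with hadef
  have ha0 : ∀ k, 0 ≤ a k := fun k =>
    integral_nonneg fun ω => Finset.sum_nonneg fun i _ => sq_nonneg _
  have harec : ∀ k, a (k + 1) ≤ c1 * a k + (c2 * B) * lam k ^ 2 := by
    intro k
    have h1 : a (k + 1) ≤ ∫ ω, (c1 * S k ω + c2 * lam k ^ 2 * U k ω) ∂ℙ :=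
      integral_mono (hS_int (k + 1))
        (((hS_int k).const_mul c1).add ((hU_int k).const_mul (c2 * lam k ^ 2)))
        (fun ω => hSrec k ω)
    rw [integral_add ((hS_int k).const_mul c1) ((hU_int k).const_mul (c2 * lam k ^ 2)),
      integral_const_mul, integral_const_mul] at h1
    have h2 : c2 * lam k ^ 2 * ∫ ω, U k ω ∂ℙ ≤ c2 * lam k ^ 2 * B :=
      mul_le_mul_of_nonneg_left (hUbound k) (by positivity)
    calc a (k + 1) ≤ c1 * a k + c2 * lam k ^ 2 * ∫ ω, U k ω ∂ℙ := h1
      _ ≤ c1 * a k + c2 * lam k ^ 2 * B := by linarith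
      _ = c1 * a k + (c2 * B) * lam k ^ 2 := by ring
  have hbsum : Summable (fun k => (c2 * B) * lam k ^ 2) := hsq.mul_left _
  have hb0 : ∀ k, 0 ≤ (c2 * B) * lam k ^ 2 := fun k => by positivity
  have haten : Tendsto a atTop (nhds 0) :=
    seq_tendsto_zero hc10 hc11 ha0 hb0 hbsum harec
  -- conclude by squeezing
  have hle : ∀ k, ∫ ω, ‖D k ω i₀‖ ^ 2 ∂ℙ ≤ a k := by
    intro k
    have hpt : ∀ ω, ‖D k ω i₀‖ ^ 2 ≤ S k ω := by
      intro ω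
      simp only [hSdef]
      exact Finset.single_le_sum (f := fun i => ‖D k ω i‖ ^ 2)
        (fun i _ => sq_nonneg _) (Finset.mem_univ i₀)
    exact integral_mono (hDsq_int k i₀) (hS_int k) hpt
  have hfinal : Tendsto (fun k => ∫ ω, ‖D k ω i₀‖ ^ 2 ∂ℙ) atTop (nhds 0) :=
    squeeze_zero (fun k => integral_nonneg fun ω => sq_nonneg _) hle haten
  refine hfinal.congr fun k => ?_
  simp only [hDdef]
end

section
/- One-step squared consensus-error recursion: Under the setting of the one-step contraction (W symmetric doubly stochastic, η := ‖W − (1/m)𝟏𝟏ᵀ‖ with 0 < η < 1, x⁺ := (W ⊗ I_d)(x − λ u), averages x̄, x̄⁺), one has ‖x⁺ − x̄⁺ ⊗ 𝟏‖² ≤ ‖x − x̄ ⊗ 𝟏‖² − (1 − η)‖x − x̄ ⊗ 𝟏‖² + λ² (η²/(1 − η)) ‖u‖². -/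
open scoped Matrix

/-- The Euclidean norm of the stacked vector `(y 1, …, y m) ∈ ℝ^{md}`. -/
noncomputable def stackedNorm {m d : ℕ} (y : Fin m → EuclideanSpace ℝ (Fin d)) : ℝ :=
  Real.sqrt (∑ i, ‖y i‖ ^ 2)

lemma euclid_sum_apply {d : ℕ} {ι : Type*} (s : Finset ι)
    (f : ι → EuclideanSpace ℝ (Fin d)) (k : Fin d) :
    (∑ i ∈ s, f i) k = ∑ i ∈ s, f i k := by
  rw [WithLp.ofLp_sum]; exact Finset.sum_apply _ _ _

lemma stackedNorm_eq_norm {m d : ℕ} (y : Fin m → EuclideanSpace ℝ (Fin d)) :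
    stackedNorm y
      = ‖(WithLp.equiv 2 (∀ _ : Fin m, EuclideanSpace ℝ (Fin d))).symm y‖ := by
  rw [stackedNorm, PiLp.norm_eq_of_L2]
  rfl

lemma stackedNorm_nonneg {m d : ℕ} (y : Fin m → EuclideanSpace ℝ (Fin d)) :
    0 ≤ stackedNorm y := Real.sqrt_nonneg _

lemma stackedNorm_sub_le {m d : ℕ} (f g : Fin m → EuclideanSpace ℝ (Fin d)) :
    stackedNorm (fun i => f i - g i) ≤ stackedNorm f + stackedNorm g := by
  rw [stackedNorm_eq_norm, stackedNorm_eq_norm, stackedNorm_eq_norm]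
  exact norm_sub_le _ _

lemma stackedNorm_smul {m d : ℕ} (c : ℝ) (hc : 0 ≤ c)
    (f : Fin m → EuclideanSpace ℝ (Fin d)) :
    stackedNorm (fun i => c • f i) = c * stackedNorm f := by
  rw [stackedNorm_eq_norm, stackedNorm_eq_norm]
  have : (WithLp.equiv 2 (∀ _ : Fin m, EuclideanSpace ℝ (Fin d))).symm
      (fun i => c • f i)
      = c • (WithLp.equiv 2 (∀ _ : Fin m, EuclideanSpace ℝ (Fin d))).symm f := rfl
  rw [this, norm_smul, Real.norm_eq_abs, abs_of_nonneg hc]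

/-- Applying `A ⊗ I_d` columnwise is bounded by the operator norm of `A`. -/
lemma stacked_op_bound {m d : ℕ} (A : Matrix (Fin m) (Fin m) ℝ)
    (y : Fin m → EuclideanSpace ℝ (Fin d)) :
    stackedNorm (fun i => ∑ j, A i j • y j)
      ≤ ‖Matrix.toEuclideanCLM (𝕜 := ℝ) (n := Fin m) A‖ * stackedNorm y := by
  set η := ‖Matrix.toEuclideanCLM (𝕜 := ℝ) (n := Fin m) A‖ with hηdef
  have hη0 : 0 ≤ η := norm_nonneg _
  rw [stackedNorm, stackedNorm]
  rw [show η * Real.sqrt (∑ i, ‖y i‖ ^ 2)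
      = Real.sqrt (η ^ 2 * ∑ i, ‖y i‖ ^ 2) by
    rw [Real.sqrt_mul (by positivity), Real.sqrt_sq hη0]]
  apply Real.sqrt_le_sqrt
  have hsq : ∀ i : Fin m, ‖(∑ j, A i j • y j : EuclideanSpace ℝ (Fin d))‖ ^ 2
      = ∑ k, (∑ j, A i j * y j k) ^ 2 := by
    intro i
    rw [PiLp.norm_sq_eq_of_L2]
    refine Finset.sum_congr rfl fun k _ => ?_
    rw [Real.norm_eq_abs, sq_abs]
    rw [show (∑ j, A i j • y j : EuclideanSpace ℝ (Fin d)) k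
        = ∑ j, (A i j • y j : EuclideanSpace ℝ (Fin d)) k from euclid_sum_apply _ _ _]
    rfl
  have hsq2 : ∀ i : Fin m, ‖y i‖ ^ 2 = ∑ k, (y i k) ^ 2 := by
    intro i
    rw [PiLp.norm_sq_eq_of_L2]
    exact Finset.sum_congr rfl fun k _ => by rw [Real.norm_eq_abs, sq_abs]
  calc ∑ i, ‖(∑ j, A i j • y j : EuclideanSpace ℝ (Fin d))‖ ^ 2
      = ∑ k, ∑ i, (∑ j, A i j * y j k) ^ 2 := by
        simp_rw [hsq]; exact Finset.sum_comm
    _ ≤ ∑ k, η ^ 2 * ∑ i, (y i k) ^ 2 := by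
        refine Finset.sum_le_sum fun k _ => ?_
        set c : EuclideanSpace ℝ (Fin m) :=
          (WithLp.equiv 2 (Fin m → ℝ)).symm (fun i => y i k) with hc
        have happ : Matrix.toEuclideanCLM (𝕜 := ℝ) (n := Fin m) A c
            = (WithLp.equiv 2 (Fin m → ℝ)).symm (A *ᵥ (fun i => y i k)) := by
          rfl
        have h1 : ∑ i, (∑ j, A i j * y j k) ^ 2
            = ‖Matrix.toEuclideanCLM (𝕜 := ℝ) (n := Fin m) A c‖ ^ 2 := by
          rw [PiLp.norm_sq_eq_of_L2]
          refine Finset.sum_congr rfl fun i _ => ?_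
          rw [Real.norm_eq_abs, sq_abs, happ]
          rfl
        have h2 : ‖c‖ ^ 2 = ∑ i, (y i k) ^ 2 := by
          rw [PiLp.norm_sq_eq_of_L2]
          refine Finset.sum_congr rfl fun i _ => by rw [Real.norm_eq_abs, sq_abs]; rfl
        rw [h1, ← h2]
        have hb := (Matrix.toEuclideanCLM (𝕜 := ℝ) (n := Fin m) A).le_opNorm c
        calc ‖Matrix.toEuclideanCLM (𝕜 := ℝ) (n := Fin m) A c‖ ^ 2
            ≤ (η * ‖c‖) ^ 2 := by
              apply pow_le_pow_left₀ (norm_nonneg _) hb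
          _ = η ^ 2 * ‖c‖ ^ 2 := by ring
    _ = η ^ 2 * ∑ i, ‖y i‖ ^ 2 := by
        rw [← Finset.mul_sum]
        congr 1
        simp_rw [hsq2]; exact Finset.sum_comm

/-- **One-step squared consensus-error recursion**: for `W` symmetric doubly stochastic
with spectral norm `η = ‖W - (1/m)𝟙𝟙ᵀ‖ ∈ (0,1)`, one step `x⁺ = (W ⊗ I_d)(x - λu)`
satisfies `‖x⁺ - x̄⁺ ⊗ 𝟙‖² ≤ ‖x - x̄ ⊗ 𝟙‖² - (1-η)‖x - x̄ ⊗ 𝟙‖² + λ²(η²/(1-η))‖u‖²`. -/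
theorem one_step_squared_consensus_recursion
    {m d : ℕ} (hm : 0 < m)
    (W : Matrix (Fin m) (Fin m) ℝ)
    (hWsymm : W.IsSymm)
    (hWnonneg : ∀ i j, 0 ≤ W i j)
    (hWrow : W *ᵥ (fun _ => (1 : ℝ)) = fun _ => 1)
    (hWcol : (fun _ => (1 : ℝ)) ᵥ* W = fun _ => 1)
    (η : ℝ)
    (hη : η = ‖Matrix.toEuclideanCLM (𝕜 := ℝ) (n := Fin m)
        (W - (m : ℝ)⁻¹ • Matrix.of (fun _ _ => (1 : ℝ)))‖)
    (hη0 : 0 < η) (hη1 : η < 1)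
    (x u : Fin m → EuclideanSpace ℝ (Fin d)) (lam : ℝ) (hlam : 0 ≤ lam)
    (xplus : Fin m → EuclideanSpace ℝ (Fin d))
    (hxplus : ∀ i, xplus i = ∑ j, W i j • (x j - lam • u j)) :
    stackedNorm (fun i => xplus i - (m : ℝ)⁻¹ • ∑ i', xplus i') ^ 2
      ≤ stackedNorm (fun i => x i - (m : ℝ)⁻¹ • ∑ i', x i') ^ 2
        - (1 - η) * stackedNorm (fun i => x i - (m : ℝ)⁻¹ • ∑ i', x i') ^ 2
        + lam ^ 2 * (η ^ 2 / (1 - η)) * stackedNorm u ^ 2 := by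
  have hm' : (m : ℝ) ≠ 0 := Nat.cast_ne_zero.mpr hm.ne'
  set A : Matrix (Fin m) (Fin m) ℝ :=
    W - (m : ℝ)⁻¹ • Matrix.of (fun _ _ => (1 : ℝ)) with hAdef
  have hA : ∀ i j, A i j = W i j - (m : ℝ)⁻¹ := by
    intro i j
    simp [hAdef, Matrix.sub_apply]
  have hrow : ∀ i, ∑ j, W i j = 1 := by
    intro i
    have := congrFun hWrow i
    simpa [Matrix.mulVec, dotProduct] using this
  have hcol : ∀ j, ∑ i, W i j = 1 := by
    intro j
    have := congrFun hWcol j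
    simpa [Matrix.vecMul, dotProduct] using this
  set e : Fin m → EuclideanSpace ℝ (Fin d) :=
    fun i => x i - (m : ℝ)⁻¹ • ∑ i', x i' with hedef
  -- the key pointwise identity
  have key : (fun i => xplus i - (m : ℝ)⁻¹ • ∑ i', xplus i')
      = fun i => ∑ j, A i j • (e j - lam • u j) := by
    funext i
    ext k
    have hxp : ∀ i' : Fin m, ∀ k' : Fin d,
        xplus i' k' = ∑ j, W i' j * (x j k' - lam * u j k') := by
      intro i' k'
      rw [hxplus i', euclid_sum_apply]
      rfl
    have hL : (xplus i - (m : ℝ)⁻¹ • ∑ i', xplus i') k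
        = xplus i k - (m : ℝ)⁻¹ * ∑ i', xplus i' k := by
      rw [show (xplus i - (m : ℝ)⁻¹ • ∑ i', xplus i') k
          = xplus i k - (m : ℝ)⁻¹ * (∑ i', xplus i') k from rfl,
        euclid_sum_apply]
    have hR : (∑ j, A i j • (e j - lam • u j) : EuclideanSpace ℝ (Fin d)) k
        = ∑ j, (W i j - (m : ℝ)⁻¹) *
            ((x j k - (m : ℝ)⁻¹ * ∑ j', x j' k) - lam * u j k) := by
      rw [euclid_sum_apply]
      refine Finset.sum_congr rfl fun j _ => ?_
      have he : (e j - lam • u j) k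
          = (x j k - (m : ℝ)⁻¹ * ∑ j', x j' k) - lam * u j k := by
        rw [show (e j - lam • u j) k = e j k - lam * u j k from rfl,
          show e j k = x j k - (m : ℝ)⁻¹ * (∑ j', x j') k from rfl,
          euclid_sum_apply]
      rw [show (A i j • (e j - lam • u j)) k
          = A i j * ((e j - lam • u j) k) from rfl, he, hA]
    rw [hL, hR]
    simp_rw [hxp]
    rw [Finset.sum_comm (γ := Fin m)]
    simp_rw [← Finset.sum_mul, hcol]
    have hexp : ∀ j : Fin m,
        (W i j - (m : ℝ)⁻¹) * ((x j k - (m : ℝ)⁻¹ * ∑ j', x j' k) - lam * u j k)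
        = W i j * (x j k - lam * u j k) - (m : ℝ)⁻¹ * (x j k - lam * u j k)
          - (W i j - (m : ℝ)⁻¹) * ((m : ℝ)⁻¹ * ∑ j', x j' k) := by
      intro j; ring
    simp_rw [hexp]
    rw [Finset.sum_sub_distrib, Finset.sum_sub_distrib, ← Finset.sum_mul,
      Finset.sum_sub_distrib, hrow, ← Finset.mul_sum]
    rw [Finset.sum_const, Finset.card_fin, nsmul_eq_mul,
      mul_inv_cancel₀ hm', sub_self, zero_mul, sub_zero, one_mul, Finset.mul_sum]
  -- norm estimates
  set a := stackedNorm e with hadef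
  set b := stackedNorm u with hbdef
  have ha0 : 0 ≤ a := stackedNorm_nonneg _
  have hb0 : 0 ≤ b := stackedNorm_nonneg _
  have hbound : stackedNorm (fun i => xplus i - (m : ℝ)⁻¹ • ∑ i', xplus i')
      ≤ η * a + lam * (η * b) := by
    rw [key]
    have hsplit : (fun i => ∑ j, A i j • (e j - lam • u j))
        = fun i => (∑ j, A i j • e j) - lam • (∑ j, A i j • u j) := by
      funext i
      rw [Finset.smul_sum]
      rw [← Finset.sum_sub_distrib]
      refine Finset.sum_congr rfl fun j _ => ?_
      rw [smul_sub, smul_comm]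
    rw [hsplit]
    calc stackedNorm (fun i => (∑ j, A i j • e j) - lam • (∑ j, A i j • u j))
        ≤ stackedNorm (fun i => ∑ j, A i j • e j)
          + stackedNorm (fun i => lam • ∑ j, A i j • u j) :=
          stackedNorm_sub_le _ _
      _ ≤ η * a + lam * (η * b) := by
          have h1 := stacked_op_bound A e
          have h2 := stacked_op_bound A u
          rw [← hη] at h1 h2
          rw [stackedNorm_smul lam hlam]
          exact add_le_add h1 (by
            exact mul_le_mul_of_nonneg_left h2 hlam)
  have hN0 : 0 ≤ stackedNorm (fun i => xplus i - (m : ℝ)⁻¹ • ∑ i', xplus i') :=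
    stackedNorm_nonneg _
  have hN2 : stackedNorm (fun i => xplus i - (m : ℝ)⁻¹ • ∑ i', xplus i') ^ 2
      ≤ (η * a + lam * (η * b)) ^ 2 := pow_le_pow_left₀ hN0 hbound 2
  have hD : (0 : ℝ) < 1 - η := by linarith
  have hc : η ^ 2 / (1 - η) * (1 - η) = η ^ 2 := div_mul_cancel₀ _ hD.ne'
  have hfin : (η * a + lam * (η * b)) ^ 2
      ≤ a ^ 2 - (1 - η) * a ^ 2 + lam ^ 2 * (η ^ 2 / (1 - η)) * b ^ 2 := by
    rw [← mul_le_mul_iff_left₀ hD]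
    have expand : (a ^ 2 - (1 - η) * a ^ 2 + lam ^ 2 * (η ^ 2 / (1 - η)) * b ^ 2)
          * (1 - η) - (η * a + lam * (η * b)) ^ 2 * (1 - η)
        = η * ((1 - η) * a - η * lam * b) ^ 2 := by
      field_simp
      ring
    have hnn := mul_nonneg hη0.le (sq_nonneg ((1 - η) * a - η * lam * b))
    linarith
  calc stackedNorm (fun i => xplus i - (m : ℝ)⁻¹ • ∑ i', xplus i') ^ 2
      ≤ (η * a + lam * (η * b)) ^ 2 := hN2
    _ ≤ a ^ 2 - (1 - η) * a ^ 2 + lam ^ 2 * (η ^ 2 / (1 - η)) * b ^ 2 := hfin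
end
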